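/- Let G be an X–Y normalized graph, and let S ⊆ N(X) be a set such that no vertex of S is adjacent to a vertex of Y. Then there is exactly one important witness of S. -/

import Mathlib

variable {V : Type*}

/-- `K` is an `X`–`Y` separator of `G`: `K` avoids `X ∪ Y` and every walk
from a vertex of `X` to a vertex of `Y` meets `K` (i.e. there is no
`X`–`Y` path in `G \ K`). -/
def IsSeparator (G : SimpleGraph V) (X Y K : Set V) : Prop :=
  K ⊆ (X ∪ Y)ᶜ ∧
  ∀ x ∈ X, ∀ y ∈ Y, ∀ w : G.Walk x y, ∃ v ∈ w.support, v ∈ K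

/-- `NR G A B`: the vertices of `G \ B` that are not reachable from `A` in `G \ B`. -/
def NR (G : SimpleGraph V) (A B : Set V) : Set V :=
  {v | v ∉ B ∧ ¬ ∃ a ∈ A, ∃ w : G.Walk a v, ∀ x ∈ w.support, x ∉ B}

/-- `Reach G A B`: the vertices reachable from `A` in `G \ B`. -/
def Reach (G : SimpleGraph V) (A B : Set V) : Set V :=
  {v | ∃ a ∈ A, ∃ w : G.Walk a v, ∀ x ∈ w.support, x ∉ B}

/-- The order on `X`–`Y` separators: `K1 ≤ K2` iff `NR(G,Y,K1) ⊆ NR(G,Y,K2)`. -/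
def SepLE (G : SimpleGraph V) (Y K1 K2 : Set V) : Prop :=
  NR G Y K1 ⊆ NR G Y K2

/-- The strict order on `X`–`Y` separators. -/
def SepLT (G : SimpleGraph V) (Y K1 K2 : Set V) : Prop :=
  NR G Y K1 ⊆ NR G Y K2 ∧ NR G Y K1 ≠ NR G Y K2

/-- A minimal `X`–`Y` separator: no proper subset is an `X`–`Y` separator. -/
def IsMinimalSeparator (G : SimpleGraph V) (X Y K : Set V) : Prop :=
  IsSeparator G X Y K ∧ ∀ K' ⊂ K, ¬ IsSeparator G X Y K'

/-- An important `X`–`Y` separator: a minimal separator `K` such that there is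
no separator `K'` with `K < K'` and `|K'| ≤ |K|`. -/
def IsImportantSeparator (G : SimpleGraph V) (X Y K : Set V) : Prop :=
  IsMinimalSeparator G X Y K ∧
  ¬ ∃ K', IsSeparator G X Y K' ∧ SepLT G Y K K' ∧ K'.ncard ≤ K.ncard

/-- The minimum size of an `X`–`Y` separator of `G`. -/
noncomputable def minSepSize (G : SimpleGraph V) (X Y : Set V) : ℕ :=
  sInf {n | ∃ K, IsSeparator G X Y K ∧ K.ncard = n}

/-- The excess of a separator: its size minus the minimum separator size. -/
noncomputable def excess (G : SimpleGraph V) (X Y K : Set V) : ℕ :=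
  K.ncard - minSepSize G X Y

/-- The graph `Pr(G,X,Y,K)`: the vertices `NR(G,Y,K) \ X` are deleted (here:
made isolated), and every vertex of `X` is made adjacent to every vertex of `K`. -/
def PrGraph (G : SimpleGraph V) (X Y K : Set V) : SimpleGraph V where
  Adj u v := u ≠ v ∧ u ∉ NR G Y K \ X ∧ v ∉ NR G Y K \ X ∧
    (G.Adj u v ∨ (u ∈ X ∧ v ∈ K) ∨ (u ∈ K ∧ v ∈ X))
  symm := by
    constructor
    rintro u v ⟨h1, h2, h3, h4⟩
    refine ⟨h1.symm, h3, h2, ?_⟩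
    rcases h4 with h | h | h
    · exact Or.inl h.symm
    · exact Or.inr (Or.inr ⟨h.2, h.1⟩)
    · exact Or.inr (Or.inl ⟨h.2, h.1⟩)
  loopless := by constructor; rintro v ⟨h1, -⟩; exact h1 rfl

/-- `NSet G X` is `N(X)`: the set of vertices outside `X` adjacent to a vertex of `X`. -/
def NSet (G : SimpleGraph V) (X : Set V) : Set V :=
  {v | v ∉ X ∧ ∃ x ∈ X, G.Adj x v}

/-- `G` is `X`–`Y` normalized: `N(X)` is an `X`–`Y` separator and is
the unique smallest `X`–`Y` separator. -/
def Normalized (G : SimpleGraph V) (X Y : Set V) : Prop :=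
  IsSeparator G X Y (NSet G X) ∧
  ∀ K, IsSeparator G X Y K → K ≠ NSet G X → (NSet G X).ncard < K.ncard

/-- The cover excess `CE(S)`: the minimum excess of an `X`–`Y` separator disjoint from `S`. -/
noncomputable def CE (G : SimpleGraph V) (X Y S : Set V) : ℕ :=
  sInf {n | ∃ K, IsSeparator G X Y K ∧ Disjoint K S ∧ excess G X Y K = n}

/-- A witness of `S`: an `X`–`Y` separator disjoint from `S` whose excess equals `CE(S)`. -/
noncomputable def IsWitness (G : SimpleGraph V) (X Y S K : Set V) : Prop :=
  IsSeparator G X Y K ∧ Disjoint K S ∧ excess G X Y K = CE G X Y S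

/-- An important witness of `S`: a witness of `S` that is an important `X`–`Y` separator. -/
noncomputable def IsImportantWitness (G : SimpleGraph V) (X Y S K : Set V) : Prop :=
  IsWitness G X Y S K ∧ IsImportantSeparator G X Y K


section Helpers
variable {V : Type*}

lemma reach_not_mem {G : SimpleGraph V} {A B : Set V} {v : V} (h : v ∈ Reach G A B) : v ∉ B := by
  obtain ⟨a, ha, w, hw⟩ := h; exact hw v w.end_mem_support

lemma mem_reach_self {G : SimpleGraph V} {A B : Set V} {v : V} (hv : v ∈ A) (hvB : v ∉ B) :
    v ∈ Reach G A B :=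
  ⟨v, hv, SimpleGraph.Walk.nil, by simpa using hvB⟩

lemma reach_adj {G : SimpleGraph V} {A B : Set V} {u v : V} (hu : u ∈ Reach G A B)
    (h : G.Adj u v) (hv : v ∉ B) : v ∈ Reach G A B := by
  obtain ⟨a, ha, w, hw⟩ := hu
  refine ⟨a, ha, w.concat h, ?_⟩
  intro x hx
  rw [SimpleGraph.Walk.support_concat, List.mem_append] at hx
  rcases hx with h1 | h1
  · exact hw x h1
  · simp at h1; subst h1; exact hv

lemma exists_boundary {G : SimpleGraph V} {P : Set V} :
    ∀ {a v : V} (w : G.Walk a v), a ∈ P → v ∉ P →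
    ∃ b ∈ w.support, b ∉ P ∧ ∃ u ∈ P, G.Adj u b := by
  intro a v w
  induction w with
  | nil => intro h1 h2; exact absurd h1 h2
  | @cons a c v h p ih =>
    intro ha hv
    by_cases hc : c ∈ P
    · obtain ⟨b, hb, hbP, u, hu, hadj⟩ := ih hc hv
      exact ⟨b, by simp [hb], hbP, u, hu, hadj⟩
    · exact ⟨c, by simp, hc, a, ha, h⟩

lemma support_mem_reach {G : SimpleGraph V} {A B : Set V} {a v : V} (w : G.Walk a v)
    (ha : a ∈ A) (hw : ∀ x ∈ w.support, x ∉ B) {b : V} (hb : b ∈ w.support) :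
    b ∈ Reach G A B := by
  classical
  exact ⟨a, ha, w.takeUntil b hb, fun x hx => hw x (SimpleGraph.Walk.support_takeUntil_subset w hb hx)⟩

/-- A vertex is in `NR G A B` iff it avoids `B` and is not in `Reach G A B`. -/
lemma mem_NR_iff {G : SimpleGraph V} {A B : Set V} {v : V} :
    v ∈ NR G A B ↔ v ∉ B ∧ v ∉ Reach G A B := Iff.rfl

/-- No vertex is reachable from both sides of a separator. -/
lemma reach_disjoint {G : SimpleGraph V} {X Y K : Set V} (hsep : IsSeparator G X Y K) :
    ∀ v, v ∈ Reach G X K → v ∈ Reach G Y K → False := by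
  rintro v ⟨x, hx, w1, h1⟩ ⟨y, hy, w2, h2⟩
  obtain ⟨b, hb, hbK⟩ := hsep.2 x hx y hy (w1.append w2.reverse)
  rw [SimpleGraph.Walk.mem_support_append_iff] at hb
  rcases hb with hb | hb
  · exact h1 b hb hbK
  · rw [SimpleGraph.Walk.support_reverse, List.mem_reverse] at hb
    exact h2 b hb hbK

lemma reachX_subset_NR {G : SimpleGraph V} {X Y K : Set V} (hsep : IsSeparator G X Y K) :
    Reach G X K ⊆ NR G Y K := fun v hv =>
  ⟨reach_not_mem hv, fun hv2 => reach_disjoint hsep v hv hv2⟩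

/-- Every vertex of a minimal separator has a neighbour reachable from `X`. -/
lemma minimal_sep_adj_reachX {G : SimpleGraph V} {X Y K : Set V}
    (hmin : IsMinimalSeparator G X Y K) {k : V} (hk : k ∈ K) :
    ∃ d ∈ Reach G X K, G.Adj d k := by
  by_contra hno
  push_neg at hno
  apply hmin.2 (K \ {k}) (Set.sdiff_singleton_ssubset.mpr hk)
  constructor
  · exact fun v hv => hmin.1.1 hv.1
  · intro x hx y hy w
    have hxP : x ∈ Reach G X K := mem_reach_self hx (fun hxK => (hmin.1.1 hxK) (Or.inl hx))
    have hyP : y ∉ Reach G X K := fun hyR => by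
      obtain ⟨a, ha, w2, h2⟩ := hyR
      obtain ⟨b, hb, hbK⟩ := hmin.1.2 a ha y hy w2
      exact h2 b hb hbK
    obtain ⟨b, hb, hbP, u, hu, hadj⟩ := exists_boundary w hxP hyP
    have hbK : b ∈ K := by
      by_contra hbK
      exact hbP (reach_adj hu hadj hbK)
    refine ⟨b, hb, hbK, ?_⟩
    intro hbk
    rw [Set.mem_singleton_iff] at hbk
    subst hbk
    exact hno u hu hadj

/-- Two minimal separators with equal `NR`-sets are equal. -/
lemma minimal_sep_eq_of_NR_eq {G : SimpleGraph V} {X Y K1 K2 : Set V}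
    (h1 : IsMinimalSeparator G X Y K1) (h2 : IsMinimalSeparator G X Y K2)
    (hNR : NR G Y K1 = NR G Y K2) : K1 = K2 := by
  have key : ∀ K1 K2, IsMinimalSeparator G X Y K1 → IsMinimalSeparator G X Y K2 →
      NR G Y K1 = NR G Y K2 → Reach G Y K1 ⊆ Reach G Y K2 := by
    intro K1 K2 h1 h2 hNR v hv
    by_contra hvT2
    obtain ⟨y, hy, w, hw⟩ := hv
    have hyT2 : y ∈ Reach G Y K2 := mem_reach_self hy (fun hyK => (h2.1.1 hyK) (Or.inr hy))
    obtain ⟨b, hb, hbP, u, hu, hadj⟩ := exists_boundary w hyT2 hvT2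
    have hbT1 : b ∈ Reach G Y K1 := support_mem_reach w hy hw hb
    have hbK2 : b ∈ K2 := by
      by_contra hbK2
      exact hbP (reach_adj hu hadj hbK2)
    obtain ⟨d, hd, hdadj⟩ := minimal_sep_adj_reachX h2 hbK2
    have hdNR : d ∈ NR G Y K1 := hNR ▸ reachX_subset_NR h2.1 hd
    exact hdNR.2 (reach_adj hbT1 hdadj.symm hdNR.1)
  have hT : Reach G Y K1 = Reach G Y K2 :=
    Set.Subset.antisymm (key K1 K2 h1 h2 hNR) (key K2 K1 h2 h1 hNR.symm)
  ext v
  constructor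
  · intro hv
    by_contra hvK2
    have hvT2 : v ∉ Reach G Y K2 := hT ▸ fun hvT1 => reach_not_mem hvT1 hv
    have : v ∈ NR G Y K2 := ⟨hvK2, hvT2⟩
    rw [← hNR] at this
    exact this.1 hv
  · intro hv
    by_contra hvK1
    have hvT1 : v ∉ Reach G Y K1 := hT ▸ fun hvT2 => reach_not_mem hvT2 hv
    have : v ∈ NR G Y K1 := ⟨hvK1, hvT1⟩
    rw [hNR] at this
    exact this.1 hv

end Helpers

/-- Let `G` be an `X`–`Y` normalized graph and `S ⊆ N(X)` a
set no vertex of which is adjacent to a vertex of `Y`.  Then there is exactly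
one important witness of `S`. -/
theorem existsUnique_important_witness
    {V : Type*} [Fintype V] (G : SimpleGraph V) (X Y S : Set V)
    (hXY : Disjoint X Y) (hnorm : Normalized G X Y)
    (hS : S ⊆ NSet G X) (hSY : ∀ s ∈ S, ∀ y ∈ Y, ¬ G.Adj s y) :
    ∃! K : Set V, IsImportantWitness G X Y S K := by
  classical
  obtain ⟨hNsep, hNuniq⟩ := hnorm
  have hlam_le : ∀ K : Set V, IsSeparator G X Y K → minSepSize G X Y ≤ K.ncard := by
    intro K hK
    exact Nat.sInf_le ⟨K, hK, rfl⟩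
  -- there are no `X`–`Y` edges
  have hnoXY : ∀ x ∈ X, ∀ y ∈ Y, ¬ G.Adj x y := by
    intro x hx y hy hadj
    obtain ⟨b, hb, hbN⟩ := hNsep.2 x hx y hy (SimpleGraph.Walk.cons hadj SimpleGraph.Walk.nil)
    simp only [SimpleGraph.Walk.support_cons, SimpleGraph.Walk.support_nil,
      List.mem_cons, List.mem_singleton, List.not_mem_nil, or_false] at hb
    rcases hb with rfl | rfl
    · exact hbN.1 hx
    · exact (hNsep.1 hbN) (Or.inr hy)
  have hSsub : ∀ s ∈ S, s ∉ X ∪ Y := fun s hs => hNsep.1 (hS hs)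
  -- `N(X ∪ S)` is a separator disjoint from `S`
  have hK0sep : IsSeparator G X Y (NSet G (X ∪ S)) := by
    constructor
    · rintro v ⟨hvP, u, hu, hadj⟩ (hv | hv)
      · exact hvP (Or.inl hv)
      · rcases hu with hu | hu
        · exact hnoXY u hu v hv hadj
        · exact hSY u hu v hv hadj
    · intro x hx y hy w
      have hyP : y ∉ X ∪ S := by
        rintro (h | h)
        · exact (Set.disjoint_left.mp hXY h) hy
        · exact (hSsub y h) (Or.inr hy)
      obtain ⟨b, hb, hbP, u, hu, hadj⟩ := exists_boundary w (Or.inl hx) hyP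
      exact ⟨b, hb, hbP, u, hu, hadj⟩
  have hK0disj : Disjoint (NSet G (X ∪ S)) S := by
    rw [Set.disjoint_left]
    intro v hv hvS
    exact hv.1 (Or.inr hvS)
  -- the defining set of `CE` is nonempty, hence witnesses exist
  have hCEne : {n | ∃ K, IsSeparator G X Y K ∧ Disjoint K S ∧ excess G X Y K = n}.Nonempty :=
    ⟨_, _, hK0sep, hK0disj, rfl⟩
  have hCEle : ∀ K, IsSeparator G X Y K → Disjoint K S → CE G X Y S ≤ excess G X Y K :=
    fun K h1 h2 => Nat.sInf_le ⟨K, h1, h2, rfl⟩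
  obtain ⟨K1, hK1sep, hK1disj, hK1ex⟩ := Nat.sInf_mem hCEne
  have hwitne : ∃ K, IsWitness G X Y S K := ⟨K1, hK1sep, hK1disj, hK1ex⟩
  -- every witness has cardinality `minSepSize + CE`
  have hwit_card : ∀ K, IsWitness G X Y S K → K.ncard = minSepSize G X Y + CE G X Y S := by
    intro K hK
    simp only [IsWitness] at hK
    obtain ⟨h1, h2, h3⟩ := hK
    have hle := hlam_le K h1
    simp only [excess] at h3
    omega
  -- every witness is a minimal separator
  have hwit_min : ∀ K, IsWitness G X Y S K → IsMinimalSeparator G X Y K := by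
    intro K hK
    have hcard := hwit_card K hK
    simp only [IsWitness] at hK
    obtain ⟨h1, h2, h3⟩ := hK
    refine ⟨h1, ?_⟩
    intro K' hK' hsepK'
    have hlt : K'.ncard < K.ncard := Set.ncard_lt_ncard hK' (Set.toFinite K)
    have hle2 := hlam_le K' hsepK'
    have hdisj' : Disjoint K' S := h2.mono_left hK'.subset
    have hCE := hCEle K' hsepK' hdisj'
    simp only [excess] at hCE h3
    omega
  -- `S` is reachable from `X` avoiding any separator disjoint from `S`
  have hS_reach : ∀ K, IsSeparator G X Y K → Disjoint K S → S ⊆ Reach G X K := by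
    intro K h1 h2 s hs
    have hsK : s ∉ K := fun h => Set.disjoint_left.mp h2 h hs
    obtain ⟨hsX, x, hx, hadj⟩ := hS hs
    have hxK : x ∉ K := fun h => (h1.1 h) (Or.inl hx)
    exact reach_adj (mem_reach_self hx hxK) hadj hsK
  -- a separator dominating a witness and not larger is itself a witness
  have hstep : ∀ K K', IsWitness G X Y S K → IsSeparator G X Y K' →
      SepLE G Y K K' → K'.ncard ≤ K.ncard → IsWitness G X Y S K' := by
    intro K K' hK h1' hle hcard
    simp only [IsWitness] at hK ⊢
    obtain ⟨h1, h2, h3⟩ := hK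
    have hdisj' : Disjoint K' S := by
      rw [Set.disjoint_right]
      intro s hs
      have hs1 : s ∈ NR G Y K := reachX_subset_NR h1 (hS_reach K h1 h2 hs)
      exact (hle hs1).1
    have hle2 := hCEle K' h1' hdisj'
    have h4 := hlam_le K' h1'
    have h5 := hlam_le K h1
    refine ⟨h1', hdisj', ?_⟩
    simp only [excess] at *
    omega
  -- choose a witness with maximal `NR`
  obtain ⟨K, hKwit, hKmax⟩ := Set.Finite.exists_maximalFor
    (fun K => (NR G Y K).ncard) {K | IsWitness G X Y S K} (Set.toFinite _) hwitne
  have hKimp : IsImportantSeparator G X Y K := by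
    refine ⟨hwit_min K hKwit, ?_⟩
    rintro ⟨K', h1', hlt, hcard⟩
    have hwit' : IsWitness G X Y S K' := hstep K K' hKwit h1' hlt.1 hcard
    have hss : NR G Y K ⊂ NR G Y K' := ssubset_of_subset_of_ne hlt.1 hlt.2
    have hltc : (NR G Y K).ncard < (NR G Y K').ncard :=
      Set.ncard_lt_ncard hss (Set.toFinite _)
    exact absurd (hKmax hwit' (le_of_lt hltc)) (not_le.mpr hltc)
  -- uniqueness
  have huniq : ∀ A B : Set V, IsImportantWitness G X Y S A → IsImportantWitness G X Y S B →
      A = B := by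
    intro A B hA hB
    simp only [IsImportantWitness, IsImportantSeparator, IsWitness] at hA hB
    obtain ⟨hAwit, hAmin, hAimp⟩ := hA
    obtain ⟨hBwit, hBmin, hBimp⟩ := hB
    obtain ⟨hAsep, hAdisj, hAex⟩ := hAwit
    obtain ⟨hBsep, hBdisj, hBex⟩ := hBwit
    set T1 := Reach G Y A with hT1
    set T2 := Reach G Y B with hT2
    have hYT1 : ∀ y ∈ Y, y ∈ T1 := fun y hy =>
      mem_reach_self hy (fun h => (hAsep.1 h) (Or.inr hy))
    have hYT2 : ∀ y ∈ Y, y ∈ T2 := fun y hy =>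
      mem_reach_self hy (fun h => (hBsep.1 h) (Or.inr hy))
    have hXT1 : ∀ x ∈ X, x ∉ T1 := fun x hx hmem =>
      reach_disjoint hAsep x (mem_reach_self hx (fun h => (hAsep.1 h) (Or.inl hx))) hmem
    have hXT2 : ∀ x ∈ X, x ∉ T2 := fun x hx hmem =>
      reach_disjoint hBsep x (mem_reach_self hx (fun h => (hBsep.1 h) (Or.inl hx))) hmem
    have hNT1 : NSet G T1 ⊆ A := by
      rintro v ⟨hvT, u, hu, hadj⟩
      by_contra hvA
      exact hvT (reach_adj hu hadj hvA)
    have hNT2 : NSet G T2 ⊆ B := by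
      rintro v ⟨hvT, u, hu, hadj⟩
      by_contra hvB
      exact hvT (reach_adj hu hadj hvB)
    -- the two uncrossed separators
    set Kst := NSet G (T1 ∩ T2) with hKstdef
    set Kun := NSet G (T1 ∪ T2) with hKundef
    have hKstSep : IsSeparator G X Y Kst := by
      constructor
      · rintro v ⟨hvP, u, hu, hadj⟩ (hv | hv)
        · have hvA : v ∉ A := fun h => (hAsep.1 h) (Or.inl hv)
          exact (hXT1 v hv) (reach_adj hu.1 hadj hvA)
        · exact hvP ⟨hYT1 v hv, hYT2 v hv⟩
      · intro x hx y hy w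
        have hxP : x ∉ T1 ∩ T2 := fun h => hXT1 x hx h.1
        have hyP : y ∈ T1 ∩ T2 := ⟨hYT1 y hy, hYT2 y hy⟩
        obtain ⟨b, hb, hbP, u, hu, hadj⟩ :=
          exists_boundary w.reverse hyP hxP
        rw [SimpleGraph.Walk.support_reverse, List.mem_reverse] at hb
        exact ⟨b, hb, hbP, u, hu, hadj⟩
    have hKunSep : IsSeparator G X Y Kun := by
      constructor
      · rintro v ⟨hvP, u, hu, hadj⟩ (hv | hv)
        · rcases hu with hu | hu
          · have hvA : v ∉ A := fun h => (hAsep.1 h) (Or.inl hv)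
            exact (hXT1 v hv) (reach_adj hu hadj hvA)
          · have hvB : v ∉ B := fun h => (hBsep.1 h) (Or.inl hv)
            exact (hXT2 v hv) (reach_adj hu hadj hvB)
        · exact hvP (Or.inl (hYT1 v hv))
      · intro x hx y hy w
        have hxP : x ∉ T1 ∪ T2 := by
          rintro (h | h)
          · exact hXT1 x hx h
          · exact hXT2 x hx h
        obtain ⟨b, hb, hbP, u, hu, hadj⟩ :=
          exists_boundary w.reverse (Or.inl (hYT1 y hy)) hxP
        rw [SimpleGraph.Walk.support_reverse, List.mem_reverse] at hb
        exact ⟨b, hb, hbP, u, hu, hadj⟩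
    -- they avoid `S`
    have hST1 : ∀ s ∈ S, s ∉ T1 := fun s hs h =>
      reach_disjoint hAsep s (hS_reach A hAsep hAdisj hs) h
    have hST2 : ∀ s ∈ S, s ∉ T2 := fun s hs h =>
      reach_disjoint hBsep s (hS_reach B hBsep hBdisj hs) h
    have hsA : ∀ s ∈ S, s ∉ A := fun s hs h => Set.disjoint_left.mp hAdisj h hs
    have hsB : ∀ s ∈ S, s ∉ B := fun s hs h => Set.disjoint_left.mp hBdisj h hs
    have hKstdisj : Disjoint Kst S := by
      rw [Set.disjoint_right]
      rintro s hs ⟨hsP, u, hu, hadj⟩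
      exact (hST1 s hs) (reach_adj hu.1 hadj (hsA s hs))
    have hKundisj : Disjoint Kun S := by
      rw [Set.disjoint_right]
      rintro s hs ⟨hsP, u, hu, hadj⟩
      rcases hu with hu | hu
      · exact (hST1 s hs) (reach_adj hu hadj (hsA s hs))
      · exact (hST2 s hs) (reach_adj hu hadj (hsB s hs))
    -- submodularity
    have hsub1 : Kun ∪ Kst ⊆ NSet G T1 ∪ NSet G T2 := by
      rintro v (⟨hvP, u, hu, hadj⟩ | ⟨hvP, u, hu, hadj⟩)
      · rcases hu with hu | hu
        · exact Or.inl ⟨fun h => hvP (Or.inl h), u, hu, hadj⟩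
        · exact Or.inr ⟨fun h => hvP (Or.inr h), u, hu, hadj⟩
      · by_cases hv1 : v ∈ T1
        · exact Or.inr ⟨fun h => hvP ⟨hv1, h⟩, u, hu.2, hadj⟩
        · exact Or.inl ⟨hv1, u, hu.1, hadj⟩
    have hsub2 : Kun ∩ Kst ⊆ NSet G T1 ∩ NSet G T2 := by
      rintro v ⟨⟨hvP, -⟩, hvQ, u, hu, hadj⟩
      exact ⟨⟨fun h => hvP (Or.inl h), u, hu.1, hadj⟩, ⟨fun h => hvP (Or.inr h), u, hu.2, hadj⟩⟩
    have hcards : Kun.ncard + Kst.ncard ≤ A.ncard + B.ncard := by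
      have e1 : (Kun ∪ Kst).ncard + (Kun ∩ Kst).ncard = Kun.ncard + Kst.ncard :=
        Set.ncard_union_add_ncard_inter _ _ (Set.toFinite _) (Set.toFinite _)
      have e2 : (Kun ∪ Kst).ncard ≤ (NSet G T1 ∪ NSet G T2).ncard :=
        Set.ncard_le_ncard hsub1 (Set.toFinite _)
      have e3 : (Kun ∩ Kst).ncard ≤ (NSet G T1 ∩ NSet G T2).ncard :=
        Set.ncard_le_ncard hsub2 (Set.toFinite _)
      have e4 : (NSet G T1 ∪ NSet G T2).ncard + (NSet G T1 ∩ NSet G T2).ncard =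
          (NSet G T1).ncard + (NSet G T2).ncard :=
        Set.ncard_union_add_ncard_inter _ _ (Set.toFinite _) (Set.toFinite _)
      have e5 : (NSet G T1).ncard ≤ A.ncard := Set.ncard_le_ncard hNT1 (Set.toFinite _)
      have e6 : (NSet G T2).ncard ≤ B.ncard := Set.ncard_le_ncard hNT2 (Set.toFinite _)
      omega
    -- `Kst` is not larger than `A` or `B`
    have hcardA : A.ncard = minSepSize G X Y + CE G X Y S := hwit_card A ⟨hAsep, hAdisj, hAex⟩
    have hcardB : B.ncard = minSepSize G X Y + CE G X Y S := hwit_card B ⟨hBsep, hBdisj, hBex⟩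
    have hKunCE := hCEle Kun hKunSep hKundisj
    have hKunlam := hlam_le Kun hKunSep
    have hKstle : Kst.ncard ≤ A.ncard ∧ Kst.ncard ≤ B.ncard := by
      simp only [excess] at hKunCE
      omega
    -- `NR(Y, A) ⊆ NR(Y, Kst)` and likewise for `B`
    have hNRst : ∀ C : Set V, Reach G Y C = T1 ∨ Reach G Y C = T2 →
        NR G Y C ⊆ NR G Y Kst := by
      rintro C hC v hv
      have hvC : v ∉ C := hv.1
      have hvR : v ∉ Reach G Y C := hv.2
      have hvT : v ∉ T1 ∩ T2 := by
        rcases hC with hC | hC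
        · rw [hC] at hvR; exact fun h => hvR h.1
        · rw [hC] at hvR; exact fun h => hvR h.2
      refine ⟨?_, ?_⟩
      · rintro ⟨hvP, u, hu, hadj⟩
        rcases hC with hC | hC
        · have hu' : u ∈ Reach G Y C := by rw [hC]; exact hu.1
          exact hvR (reach_adj hu' hadj hvC)
        · have hu' : u ∈ Reach G Y C := by rw [hC]; exact hu.2
          exact hvR (reach_adj hu' hadj hvC)
      · rintro ⟨y, hy, w, hw⟩
        have hyP : y ∈ T1 ∩ T2 := ⟨hYT1 y hy, hYT2 y hy⟩
        obtain ⟨b, hb, hbP, u, hu, hadj⟩ := exists_boundary w hyP hvT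
        exact hw b hb ⟨hbP, u, hu, hadj⟩
    -- importance forces `NR(Y,A) = NR(Y,Kst) = NR(Y,B)`
    have hNReqA : NR G Y A = NR G Y Kst := by
      by_contra hne
      exact hAimp ⟨Kst, hKstSep, ⟨hNRst A (Or.inl rfl), hne⟩, hKstle.1⟩
    have hNReqB : NR G Y B = NR G Y Kst := by
      by_contra hne
      exact hBimp ⟨Kst, hKstSep, ⟨hNRst B (Or.inr rfl), hne⟩, hKstle.2⟩
    exact minimal_sep_eq_of_NR_eq hAmin hBmin (hNReqA.trans hNReqB.symm)
  exact ⟨K, ⟨hKwit, hKimp⟩, fun K2 hK2 => huniq K2 K hK2 ⟨hKwit, hKimp⟩⟩
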